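/- If C₁ and C₂ are two convex bodies in the plane, both containing the origin in their interiors, such that for every nonzero vector v the points where the ray {λv : λ ≥ 0} meets the boundaries of C₁ and C₂ have parallel supporting lines, then C₁ = λC₂ for some λ > 0. -/

import Mathlib

open MeasureTheory Filter Set Metric


/-- A Lipschitz function with a.e. zero derivative is monotone (hence constant). -/
lemma aux_mono {F : ℝ → ℝ} {L : NNReal} (hF : LipschitzWith L F)
    (h : ∀ᵐ x, HasDerivAt F 0 x) {a b : ℝ} (hab : a ≤ b) : F a ≤ F b := by
  set g : ℝ → ℝ := fun x => F x + x * L with hg_def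
  have key : ∀ x y : ℝ, x ≤ y → F x - F y ≤ L * (y - x) := by
    intro x y hxy
    have h1 : |F x - F y| ≤ L * |x - y| := by
      simpa [Real.dist_eq] using hF.dist_le_mul x y
    rw [abs_sub_comm x y, abs_of_nonneg (by linarith : (0:ℝ) ≤ y - x)] at h1
    linarith [(le_abs_self (F x - F y)).trans h1]
  have hg : Monotone g := by
    intro x y hxy
    have := key x y hxy
    simp only [hg_def]
    nlinarith
  have hgd : ∀ᵐ x, HasDerivAt g (L : ℝ) x := by
    filter_upwards [h] with x hx
    have := hx.add (hasDerivAt_mul_const (L : ℝ)); rw [zero_add] at this; exact this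
  set μ := hg.stieltjesFunction.measure with hμ_def
  have hrn : ∀ᵐ x, (μ.rnDeriv volume x).toReal = (L : ℝ) := by
    filter_upwards [hg.ae_hasDerivAt, hgd] with x h1 h2 using h1.unique h2
  have hlt : ∀ᵐ x ∂volume, μ.rnDeriv volume x < ⊤ := Measure.rnDeriv_lt_top μ volume
  have hofreal : ∀ᵐ x ∂volume, μ.rnDeriv volume x = ENNReal.ofReal (L : ℝ) := by
    filter_upwards [hrn, hlt] with x h1 h2
    rw [← h1, ENNReal.ofReal_toReal h2.ne]
  have h1 : volume.withDensity (μ.rnDeriv volume) (Set.Ioc a b) ≤ μ (Set.Ioc a b) :=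
    Measure.withDensity_rnDeriv_le μ volume _
  have h2 : volume.withDensity (μ.rnDeriv volume) (Set.Ioc a b)
      = ENNReal.ofReal ((L : ℝ) * (b - a)) := by
    rw [withDensity_apply _ measurableSet_Ioc,
      lintegral_congr_ae (ae_restrict_of_ae hofreal), setLIntegral_const,
      Real.volume_Ioc, ← ENNReal.ofReal_mul L.coe_nonneg]
  have hse : ∀ x, hg.stieltjesFunction x = g x := by
    intro x
    have hgc : Continuous g := by
      have := hF.continuous
      fun_prop
    exact (hg.stieltjesFunction_eq x).trans
      (rightLim_eq_of_tendsto
        ((hgc.tendsto x).mono_left nhdsWithin_le_nhds))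
  rw [h2] at h1
  rw [hμ_def, StieltjesFunction.measure_Ioc, hse, hse] at h1
  have h3 : (L : ℝ) * (b - a) ≤ g b - g a := by
    have hnn : (0:ℝ) ≤ g b - g a := sub_nonneg.2 (hg hab)
    exact (ENNReal.ofReal_le_ofReal_iff hnn).1 h1
  simp only [hg_def] at h3
  linarith

lemma aux_const {F : ℝ → ℝ} {L : NNReal} (hF : LipschitzWith L F)
    (h : ∀ᵐ x, HasDerivAt F 0 x) (a b : ℝ) : F a = F b := by
  have hneg : ∀ᵐ x, HasDerivAt (fun y => -F y) 0 x := by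
    filter_upwards [h] with x hx using by have := hx.neg; rw [neg_zero] at this; exact this
  rcases le_total a b with hab | hab
  · have h1 := aux_mono hF h hab
    have h2 := aux_mono hF.neg hneg hab
    simp only [Pi.neg_apply] at h2
    linarith
  · have h1 := aux_mono hF h hab
    have h2 := aux_mono hF.neg hneg hab
    simp only [Pi.neg_apply] at h2
    linarith


lemma aux_div_lipschitz {f g : ℝ → ℝ} {Lf Lg : NNReal} {M Mg ε : ℝ}
    (hf : LipschitzWith Lf f) (hg : LipschitzWith Lg g) (hε : 0 < ε)
    (hM : ∀ x, |f x| ≤ M) (hMg : ∀ x, g x ≤ Mg) (hgε : ∀ x, ε ≤ g x) :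
    ∃ K : NNReal, LipschitzWith K (fun x => f x / g x) := by
  have hM0 : 0 ≤ M := (abs_nonneg _).trans (hM 0)
  refine ⟨Real.toNNReal ((Lf * Mg + M * Lg) / ε ^ 2),
    LipschitzWith.of_dist_le_mul fun x y => ?_⟩
  have hgx : (0:ℝ) < g x := hε.trans_le (hgε x)
  have hgy : (0:ℝ) < g y := hε.trans_le (hgε y)
  have hfd : |f x - f y| ≤ Lf * |x - y| := by
    simpa [Real.dist_eq] using hf.dist_le_mul x y
  have hgd : |g y - g x| ≤ Lg * |x - y| := by
    simpa [Real.dist_eq, abs_sub_comm] using hg.dist_le_mul x y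
  have hnum : |f x * g y - g x * f y| ≤ (Lf * Mg + M * Lg) * |x - y| := by
    have e : f x * g y - g x * f y = (f x - f y) * g y + f y * (g y - g x) := by ring
    rw [e]
    calc |(f x - f y) * g y + f y * (g y - g x)|
        ≤ |(f x - f y) * g y| + |f y * (g y - g x)| := abs_add_le _ _
      _ = |f x - f y| * |g y| + |f y| * |g y - g x| := by rw [abs_mul, abs_mul]
      _ ≤ (Lf * |x - y|) * Mg + M * (Lg * |x - y|) := by
          have h1 : |g y| ≤ Mg := by rw [abs_of_pos hgy]; exact hMg y
          have h2 : |f y| ≤ M := hM y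
          gcongr
      _ = (Lf * Mg + M * Lg) * |x - y| := by ring
  have hden : ε ^ 2 ≤ |g x * g y| := by
    rw [abs_of_pos (mul_pos hgx hgy)]
    nlinarith [hgε x, hgε y]
  rw [Real.dist_eq, Real.dist_eq, div_sub_div _ _ hgx.ne' hgy.ne', abs_div]
  have hMg0 : (0:ℝ) ≤ Mg := hε.le.trans ((hgε 0).trans (hMg 0))
  have hcoe : (Real.toNNReal ((Lf * Mg + M * Lg) / ε ^ 2) : ℝ)
      = (Lf * Mg + M * Lg) / ε ^ 2 := by
    rw [Real.coe_toNNReal]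
    exact div_nonneg (add_nonneg (mul_nonneg Lf.coe_nonneg hMg0)
      (mul_nonneg hM0 Lg.coe_nonneg)) (by positivity)
  rw [hcoe]
  calc |f x * g y - g x * f y| / |g x * g y|
      ≤ ((Lf * Mg + M * Lg) * |x - y|) / ε ^ 2 := by
        apply div_le_div₀ (by positivity) hnum (by positivity) hden
    _ = (Lf * Mg + M * Lg) / ε ^ 2 * |x - y| := by ring

lemma aux_pos_sup {E : Type*} [NormedAddCommGroup E] [NormedSpace ℝ E]
    {C : Set E} (hn : C ∈ nhds (0 : E)) {φ : E →L[ℝ] ℝ} (hφ : φ ≠ 0) {m : ℝ}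
    (hm : ∀ x ∈ C, φ x ≤ m) : 0 < m := by
  obtain ⟨w, hw⟩ : ∃ w, φ w ≠ 0 := by
    by_contra hcon
    push_neg at hcon
    exact hφ (ContinuousLinearMap.ext fun w => by simp [hcon w])
  obtain ⟨δ, hδ, hball⟩ := Metric.mem_nhds_iff.1 hn
  set w' := if 0 < φ w then w else -w with hw'_def
  have hφw' : 0 < φ w' := by
    rcases lt_trichotomy (φ w) 0 with h | h | h
    · simp only [hw'_def, if_neg (not_lt.2 h.le)]
      simpa using h
    · exact absurd h hw
    · simpa [hw'_def, if_pos h] using h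
  have hw'0 : w' ≠ 0 := by
    intro h
    rw [h] at hφw'
    simp at hφw'
  have hwn : (0:ℝ) < ‖w'‖ := norm_pos_iff.2 hw'0
  set z := (δ / (2 * ‖w'‖)) • w' with hz_def
  have hznorm : ‖z‖ = δ / 2 := by
    rw [hz_def, norm_smul, Real.norm_eq_abs, abs_of_pos (by positivity)]
    field_simp
  have hzC : z ∈ C := by
    apply hball
    simp only [mem_ball, dist_zero_right, hznorm]
    linarith
  have hφz : 0 < φ z := by
    rw [hz_def, _root_.map_smul, smul_eq_mul]
    positivity
  exact hφz.trans_le (hm z hzC)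

set_option maxHeartbeats 1600000

/-- If two convex bodies in the plane, both containing the origin in their interiors, are
such that the points where each ray from the origin meets their boundaries have parallel
supporting lines, then the bodies are positive multiples of one another. -/
theorem stmt0 {V : Type*} [NormedAddCommGroup V] [NormedSpace ℝ V]
    (hdim : Module.finrank ℝ V = 2)
    (C₁ C₂ : Set V)
    (h₁c : IsCompact C₁) (h₁v : Convex ℝ C₁) (h₁i : (0 : V) ∈ interior C₁)
    (h₂c : IsCompact C₂) (h₂v : Convex ℝ C₂) (h₂i : (0 : V) ∈ interior C₂)
    (hpar : ∀ v : V, v ≠ 0 → ∀ a b : V, a ∈ frontier C₁ → b ∈ frontier C₂ →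
      (∃ s : ℝ, 0 ≤ s ∧ a = s • v) → (∃ t : ℝ, 0 ≤ t ∧ b = t • v) →
      ∃ φ : V →L[ℝ] ℝ, φ ≠ 0 ∧ (∀ x ∈ C₁, φ x ≤ φ a) ∧ (∀ x ∈ C₂, φ x ≤ φ b)) :
    ∃ l : ℝ, 0 < l ∧ C₁ = (fun x : V => l • x) '' C₂ := by
  classical
  have h₁cl : IsClosed C₁ := h₁c.isClosed
  have h₂cl : IsClosed C₂ := h₂c.isClosed
  have h₁n : C₁ ∈ nhds (0:V) := mem_interior_iff_mem_nhds.1 h₁i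
  have h₂n : C₂ ∈ nhds (0:V) := mem_interior_iff_mem_nhds.1 h₂i
  have h₁abs : Absorbent ℝ C₁ := absorbent_nhds_zero h₁n
  have h₂abs : Absorbent ℝ C₂ := absorbent_nhds_zero h₂n
  have h₁bdd : Bornology.IsVonNBounded ℝ C₁ := NormedSpace.isVonNBounded_of_isBounded ℝ h₁c.isBounded
  have h₂bdd : Bornology.IsVonNBounded ℝ C₂ := NormedSpace.isVonNBounded_of_isBounded ℝ h₂c.isBounded
  have hmem₁ : ∀ x : V, x ∈ C₁ ↔ gauge C₁ x ≤ 1 := fun x =>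
    ⟨fun h => gauge_le_one_of_mem h,
     fun h => h₁cl.closure_eq ▸ (gauge_le_one_iff_mem_closure h₁v h₁n).1 h⟩
  have hmem₂ : ∀ x : V, x ∈ C₂ ↔ gauge C₂ x ≤ 1 := fun x =>
    ⟨fun h => gauge_le_one_of_mem h,
     fun h => h₂cl.closure_eq ▸ (gauge_le_one_iff_mem_closure h₂v h₂n).1 h⟩
  have hpos₁ : ∀ x : V, x ≠ 0 → 0 < gauge C₁ x := fun x hx => (gauge_pos h₁abs h₁bdd).2 hx
  have hpos₂ : ∀ x : V, x ≠ 0 → 0 < gauge C₂ x := fun x hx => (gauge_pos h₂abs h₂bdd).2 hx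
  -- a basis of the plane
  have hfd : FiniteDimensional ℝ V := Module.finite_of_finrank_eq_succ hdim
  let b : Module.Basis (Fin 2) ℝ V := Module.finBasisOfFinrankEq ℝ V hdim
  set e₁ : V := b 0 with he₁
  set e₂ : V := b 1 with he₂
  have hcoord : ∀ x y : ℝ, x • e₁ + y • e₂ = 0 → x = 0 ∧ y = 0 := by
    intro x y hxy
    have h0 := congrArg (fun w => (b.repr w) 0) hxy
    have h1 := congrArg (fun w => (b.repr w) 1) hxy
    simp [he₁, he₂, Finsupp.single_apply] at h0 h1
    exact ⟨h0, h1⟩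
  set u : ℝ → V := fun θ => Real.cos θ • e₁ + Real.sin θ • e₂ with hu_def
  have hu0 : ∀ θ, u θ ≠ 0 := by
    intro θ h
    obtain ⟨hc, hs⟩ := hcoord _ _ h
    nlinarith [Real.sin_sq_add_cos_sq θ]
  set du : ℝ → V := fun θ => (-Real.sin θ) • e₁ + Real.cos θ • e₂ with hdu_def
  have hud : ∀ θ, HasDerivAt u (du θ) θ := fun θ =>
    ((Real.hasDerivAt_cos θ).smul_const e₁).add ((Real.hasDerivAt_sin θ).smul_const e₂)
  have hubound : ∀ θ, ‖u θ‖ ≤ ‖e₁‖ + ‖e₂‖ := by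
    intro θ
    calc ‖u θ‖ ≤ ‖Real.cos θ • e₁‖ + ‖Real.sin θ • e₂‖ := norm_add_le _ _
      _ = |Real.cos θ| * ‖e₁‖ + |Real.sin θ| * ‖e₂‖ := by
          rw [norm_smul, norm_smul, Real.norm_eq_abs, Real.norm_eq_abs]
      _ ≤ 1 * ‖e₁‖ + 1 * ‖e₂‖ := by
          gcongr
          · exact Real.abs_cos_le_one θ
          · exact Real.abs_sin_le_one θ
      _ = ‖e₁‖ + ‖e₂‖ := by ring
  have hdubound : ∀ θ, ‖du θ‖ ≤ ‖e₁‖ + ‖e₂‖ := by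
    intro θ
    calc ‖du θ‖ ≤ ‖(-Real.sin θ) • e₁‖ + ‖Real.cos θ • e₂‖ := norm_add_le _ _
      _ = |(-Real.sin θ)| * ‖e₁‖ + |Real.cos θ| * ‖e₂‖ := by
          rw [norm_smul, norm_smul, Real.norm_eq_abs, Real.norm_eq_abs]
      _ ≤ 1 * ‖e₁‖ + 1 * ‖e₂‖ := by
          gcongr
          · rw [abs_neg]; exact Real.abs_sin_le_one θ
          · exact Real.abs_cos_le_one θ
      _ = ‖e₁‖ + ‖e₂‖ := by ring
  have huLip : LipschitzWith (‖e₁‖₊ + ‖e₂‖₊) u := by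
    apply lipschitzWith_of_nnnorm_deriv_le (fun θ => (hud θ).differentiableAt)
    intro θ
    rw [(hud θ).deriv, ← NNReal.coe_le_coe]
    push_cast
    exact hdubound θ
  set f₁ : ℝ → ℝ := fun θ => gauge C₁ (u θ) with hf₁_def
  set f₂ : ℝ → ℝ := fun θ => gauge C₂ (u θ) with hf₂_def
  have hf₁pos : ∀ θ, 0 < f₁ θ := fun θ => hpos₁ _ (hu0 θ)
  have hf₂pos : ∀ θ, 0 < f₂ θ := fun θ => hpos₂ _ (hu0 θ)
  obtain ⟨K₁, hK₁⟩ := h₁v.lipschitz_gauge h₁n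
  obtain ⟨K₂, hK₂⟩ := h₂v.lipschitz_gauge h₂n
  have hf₁Lip : LipschitzWith (K₁ * (‖e₁‖₊ + ‖e₂‖₊)) f₁ := hK₁.comp huLip
  have hf₂Lip : LipschitzWith (K₂ * (‖e₁‖₊ + ‖e₂‖₊)) f₂ := hK₂.comp huLip
  have hgauge_le : ∀ (C : Set V) (K : NNReal), LipschitzWith K (gauge C) →
      ∀ x : V, gauge C x ≤ K * ‖x‖ := by
    intro C K hK x
    have h := hK.dist_le_mul x 0
    rw [Real.dist_eq, gauge_zero, sub_zero, dist_zero_right] at h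
    exact (le_abs_self _).trans h
  have hM₁ : ∀ θ, |f₁ θ| ≤ K₁ * (‖e₁‖ + ‖e₂‖) := by
    intro θ
    rw [abs_of_pos (hf₁pos θ)]
    calc f₁ θ ≤ K₁ * ‖u θ‖ := hgauge_le _ _ hK₁ _
      _ ≤ K₁ * (‖e₁‖ + ‖e₂‖) := mul_le_mul_of_nonneg_left (hubound θ) K₁.coe_nonneg
  have hM₂ : ∀ θ, f₂ θ ≤ K₂ * (‖e₁‖ + ‖e₂‖) := by
    intro θ
    calc f₂ θ ≤ K₂ * ‖u θ‖ := hgauge_le _ _ hK₂ _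
      _ ≤ K₂ * (‖e₁‖ + ‖e₂‖) := mul_le_mul_of_nonneg_left (hubound θ) K₂.coe_nonneg
  -- uniform lower bound on ‖u θ‖
  obtain ⟨m, hm0, hmle⟩ : ∃ m, 0 < m ∧ ∀ θ, m ≤ ‖u θ‖ := by
    set S : Set (ℝ × ℝ) := {p : ℝ × ℝ | p.1 ^ 2 + p.2 ^ 2 = 1} with hS_def
    have hScl : IsClosed S := isClosed_eq (by fun_prop) continuous_const
    have hSbd : Bornology.IsBounded S := by
      apply Bornology.IsBounded.subset (Metric.isBounded_closedBall (x := ((0, 0) : ℝ × ℝ)) (r := 1))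
      intro p hp
      have hp' : p.1 ^ 2 + p.2 ^ 2 = 1 := hp
      simp only [Metric.mem_closedBall, Prod.dist_eq, Real.dist_eq, sub_zero]
      apply max_le
      · exact abs_le.2 ⟨by nlinarith [sq_nonneg p.2], by nlinarith [sq_nonneg p.2]⟩
      · exact abs_le.2 ⟨by nlinarith [sq_nonneg p.1], by nlinarith [sq_nonneg p.1]⟩
    have hScomp : IsCompact S := Metric.isCompact_of_isClosed_isBounded hScl hSbd
    have hSne : S.Nonempty := ⟨(1, 0), by simp [hS_def]⟩
    have hcont : Continuous fun p : ℝ × ℝ => ‖p.1 • e₁ + p.2 • e₂‖ := by fun_prop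
    obtain ⟨p₀, hp₀S, hp₀min⟩ := hScomp.exists_isMinOn hSne hcont.continuousOn
    refine ⟨‖p₀.1 • e₁ + p₀.2 • e₂‖, ?_, fun θ => ?_⟩
    · rw [norm_pos_iff]
      intro h
      obtain ⟨h1, h2⟩ := hcoord _ _ h
      have : p₀.1 ^ 2 + p₀.2 ^ 2 = 1 := hp₀S
      rw [h1, h2] at this
      norm_num at this
    · have := hp₀min (show ((Real.cos θ, Real.sin θ) : ℝ × ℝ) ∈ S by
        simp only [hS_def, mem_setOf_eq]; exact Real.cos_sq_add_sin_sq θ)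
      simpa [hu_def] using this
  obtain ⟨R, hRpos, hRsub⟩ := h₂c.isBounded.subset_closedBall_lt 0 0
  have hεf₂ : ∀ θ, m / R ≤ f₂ θ := by
    intro θ
    calc m / R ≤ ‖u θ‖ / R := by gcongr; exact hmle θ
      _ ≤ gauge C₂ (u θ) := le_gauge_of_subset_closedBall h₂abs hRpos.le hRsub
  have hεpos : 0 < m / R := div_pos hm0 hRpos
  obtain ⟨K, hKLip⟩ := aux_div_lipschitz hf₁Lip hf₂Lip hεpos hM₁ hM₂ hεf₂
  -- boundary points on each ray
  have hgb₁ : ∀ t, gauge C₁ ((f₁ t)⁻¹ • u t) = 1 := by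
    intro t
    rw [gauge_smul_of_nonneg (inv_nonneg.2 (hf₁pos t).le), smul_eq_mul,
      inv_mul_cancel₀ (hf₁pos t).ne']
  have hgb₂ : ∀ t, gauge C₂ ((f₂ t)⁻¹ • u t) = 1 := by
    intro t
    rw [gauge_smul_of_nonneg (inv_nonneg.2 (hf₂pos t).le), smul_eq_mul,
      inv_mul_cancel₀ (hf₂pos t).ne']
  -- the key pointwise derivative identity
  have key : ∀ θ, DifferentiableAt ℝ f₁ θ → DifferentiableAt ℝ f₂ θ →
      HasDerivAt (fun t => f₁ t / f₂ t) 0 θ := by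
    intro θ hd₁ hd₂
    obtain ⟨φ, hφ0, hφ1, hφ2⟩ := hpar (u θ) (hu0 θ) ((f₁ θ)⁻¹ • u θ) ((f₂ θ)⁻¹ • u θ)
      (mem_frontier_of_gauge_eq_one h₁v (interior_subset h₁i) h₁abs (hgb₁ θ))
      (mem_frontier_of_gauge_eq_one h₂v (interior_subset h₂i) h₂abs (hgb₂ θ))
      ⟨(f₁ θ)⁻¹, inv_nonneg.2 (hf₁pos θ).le, rfl⟩
      ⟨(f₂ θ)⁻¹, inv_nonneg.2 (hf₂pos θ).le, rfl⟩
    set c₁ : ℝ := φ ((f₁ θ)⁻¹ • u θ) with hc₁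
    set c₂ : ℝ := φ ((f₂ θ)⁻¹ • u θ) with hc₂
    have hc₁pos : 0 < c₁ := aux_pos_sup h₁n hφ0 hφ1
    have hc₂pos : 0 < c₂ := aux_pos_sup h₂n hφ0 hφ2
    have heq₁ : f₁ θ * c₁ = φ (u θ) := by
      rw [hc₁, _root_.map_smul, smul_eq_mul, ← mul_assoc,
        mul_inv_cancel₀ (hf₁pos θ).ne', one_mul]
    have heq₂ : f₂ θ * c₂ = φ (u θ) := by
      rw [hc₂, _root_.map_smul, smul_eq_mul, ← mul_assoc,
        mul_inv_cancel₀ (hf₂pos θ).ne', one_mul]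
    have hineq₁ : ∀ t, φ (u t) ≤ f₁ t * c₁ := by
      intro t
      have hmemt : (f₁ t)⁻¹ • u t ∈ C₁ := (hmem₁ _).2 (le_of_eq (hgb₁ t))
      have h := hφ1 _ hmemt
      rw [_root_.map_smul, smul_eq_mul] at h
      calc φ (u t) = f₁ t * ((f₁ t)⁻¹ * φ (u t)) := by
            rw [← mul_assoc, mul_inv_cancel₀ (hf₁pos t).ne', one_mul]
        _ ≤ f₁ t * c₁ := mul_le_mul_of_nonneg_left h (hf₁pos t).le
    have hineq₂ : ∀ t, φ (u t) ≤ f₂ t * c₂ := by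
      intro t
      have hmemt : (f₂ t)⁻¹ • u t ∈ C₂ := (hmem₂ _).2 (le_of_eq (hgb₂ t))
      have h := hφ2 _ hmemt
      rw [_root_.map_smul, smul_eq_mul] at h
      calc φ (u t) = f₂ t * ((f₂ t)⁻¹ * φ (u t)) := by
            rw [← mul_assoc, mul_inv_cancel₀ (hf₂pos t).ne', one_mul]
        _ ≤ f₂ t * c₂ := mul_le_mul_of_nonneg_left h (hf₂pos t).le
    have hG₁d : HasDerivAt (fun t => f₁ t * c₁ - φ (u t)) (deriv f₁ θ * c₁ - φ (du θ)) θ :=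
      (hd₁.hasDerivAt.mul_const c₁).sub (φ.hasFDerivAt.comp_hasDerivAt θ (hud θ))
    have hG₂d : HasDerivAt (fun t => f₂ t * c₂ - φ (u t)) (deriv f₂ θ * c₂ - φ (du θ)) θ :=
      (hd₂.hasDerivAt.mul_const c₂).sub (φ.hasFDerivAt.comp_hasDerivAt θ (hud θ))
    have hG₁min : IsLocalMin (fun t => f₁ t * c₁ - φ (u t)) θ :=
      Filter.Eventually.of_forall fun t => by
        simp only
        linarith [hineq₁ t, heq₁]
    have hG₂min : IsLocalMin (fun t => f₂ t * c₂ - φ (u t)) θ :=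
      Filter.Eventually.of_forall fun t => by
        simp only
        linarith [hineq₂ t, heq₂]
    have h1 : deriv f₁ θ * c₁ - φ (du θ) = 0 := hG₁min.hasDerivAt_eq_zero hG₁d
    have h2 : deriv f₂ θ * c₂ - φ (du θ) = 0 := hG₂min.hasDerivAt_eq_zero hG₂d
    have hF := hd₁.hasDerivAt.div hd₂.hasDerivAt (hf₂pos θ).ne'
    have hnum : deriv f₁ θ * f₂ θ - f₁ θ * deriv f₂ θ = 0 := by
      have d1 : deriv f₁ θ = φ (du θ) / c₁ := by
        rw [eq_div_iff hc₁pos.ne']; linarith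
      have d2 : deriv f₂ θ = φ (du θ) / c₂ := by
        rw [eq_div_iff hc₂pos.ne']; linarith
      have a1 : f₁ θ = φ (u θ) / c₁ := by
        rw [eq_div_iff hc₁pos.ne']; linarith
      have a2 : f₂ θ = φ (u θ) / c₂ := by
        rw [eq_div_iff hc₂pos.ne']; linarith
      rw [d1, d2, a1, a2]
      ring
    rw [hnum, zero_div] at hF; exact hF
  -- almost-everywhere zero derivative, hence constant ratio
  have hae : ∀ᵐ θ, HasDerivAt (fun t => f₁ t / f₂ t) 0 θ := by
    filter_upwards [hf₁Lip.ae_differentiableAt, hf₂Lip.ae_differentiableAt] with θ hh1 hh2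
    exact key θ hh1 hh2
  have hconst : ∀ θ, f₁ θ / f₂ θ = f₁ 0 / f₂ 0 := fun θ => aux_const hKLip hae θ 0
  set l₀ : ℝ := f₁ 0 / f₂ 0 with hl₀
  have hl₀pos : 0 < l₀ := div_pos (hf₁pos 0) (hf₂pos 0)
  have hratio : ∀ v : V, gauge C₁ v = l₀ * gauge C₂ v := by
    intro v
    rcases eq_or_ne v 0 with rfl | hv
    · simp [gauge_zero]
    · obtain ⟨r, θ, hr, hvu⟩ : ∃ r : ℝ, ∃ θ : ℝ, 0 < r ∧ v = r • u θ := by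
        have hv_eq : v = b.repr v 0 • e₁ + b.repr v 1 • e₂ := by
          have h := b.sum_repr v
          rw [Fin.sum_univ_two] at h
          exact h.symm
        set z : ℂ := ⟨b.repr v 0, b.repr v 1⟩ with hz
        have hz0 : z ≠ 0 := by
          intro h
          apply hv
          have hx : b.repr v 0 = 0 := congrArg Complex.re h
          have hy : b.repr v 1 = 0 := congrArg Complex.im h
          rw [hv_eq, hx, hy]
          simp
        refine ⟨‖z‖, Complex.arg z, norm_pos_iff.2 hz0, ?_⟩
        rw [hv_eq, hu_def]
        simp only [smul_add, smul_smul]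
        rw [Complex.norm_mul_cos_arg, Complex.norm_mul_sin_arg]
      have hg1 : gauge C₁ v = r * f₁ θ := by
        rw [hvu, gauge_smul_of_nonneg hr.le, smul_eq_mul]
      have hg2 : gauge C₂ v = r * f₂ θ := by
        rw [hvu, gauge_smul_of_nonneg hr.le, smul_eq_mul]
      have hc := hconst θ
      rw [div_eq_iff (hf₂pos θ).ne'] at hc
      rw [hg1, hg2, hc]
      ring
  refine ⟨l₀⁻¹, inv_pos.2 hl₀pos, ?_⟩
  ext x
  simp only [Set.mem_image]
  constructor
  · intro hx
    refine ⟨l₀ • x, ?_, by rw [smul_smul, inv_mul_cancel₀ hl₀pos.ne', one_smul]⟩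
    rw [hmem₂, gauge_smul_of_nonneg hl₀pos.le, smul_eq_mul]
    have h := hratio x
    have hx1 : gauge C₁ x ≤ 1 := (hmem₁ x).1 hx
    nlinarith [gauge_nonneg (s := C₂) x]
  · rintro ⟨y, hy, rfl⟩
    rw [hmem₁, hratio, gauge_smul_of_nonneg (inv_nonneg.2 hl₀pos.le), smul_eq_mul]
    have hy1 : gauge C₂ y ≤ 1 := (hmem₂ y).1 hy
    have : l₀ * (l₀⁻¹ * gauge C₂ y) = gauge C₂ y := by field_simp
    rw [this]
    exact hy1
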